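/- arXiv:2305.02611 — 3 statements merged into one kernel-verified Lean document; each statement's English description precedes it below -/
import Mathlib

section
/- Let n ≥ 0 and s ≥ 1. The quotient ring ℤ₂[c, d]/(c^{n+1}, d² + c^s) of the polynomial ring in two variables c, d over ℤ₂ has dimension 2n + 2 as a vector space over ℤ₂. -/
open MvPolynomial

noncomputable section

namespace TwistedRingAux

abbrev R2 := ZMod 2

variable (n s : ℕ)

abbrev fpoly : Polynomial R2 := Polynomial.X ^ (n + 1)

abbrev Aring := AdjoinRoot (fpoly n)

abbrev gpoly : Polynomial (Aring n) :=
  Polynomial.X ^ 2 + Polynomial.C (AdjoinRoot.root (fpoly n) ^ s)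

abbrev Bring := AdjoinRoot (gpoly n s)

abbrev Igen : Set (MvPolynomial (Fin 2) R2) :=
  {(X 0 : MvPolynomial (Fin 2) R2) ^ (n + 1), (X 1) ^ 2 + (X 0) ^ s}

abbrev Qring := MvPolynomial (Fin 2) R2 ⧸ Ideal.span (Igen n s)

abbrev cB : Bring n s := AdjoinRoot.of (gpoly n s) (AdjoinRoot.root (fpoly n))
abbrev dB : Bring n s := AdjoinRoot.root (gpoly n s)

abbrev φ : MvPolynomial (Fin 2) R2 →ₐ[R2] Bring n s := aeval ![cB n s, dB n s]

theorem hmonic_f : (fpoly n).Monic := Polynomial.monic_X_pow _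

theorem hmonic_g : (gpoly n s).Monic := Polynomial.monic_X_pow_add_C _ two_ne_zero

theorem c_pow : cB n s ^ (n + 1) = 0 := by
  rw [← map_pow]
  have : AdjoinRoot.root (fpoly n) ^ (n + 1) = 0 := by
    have := AdjoinRoot.eval₂_root (fpoly n)
    simpa [fpoly] using this
  rw [this, map_zero]

theorem d_sq : dB n s ^ 2 + cB n s ^ s = 0 := by
  have := AdjoinRoot.eval₂_root (gpoly n s)
  simpa only [gpoly, Polynomial.eval₂_add, Polynomial.eval₂_pow, Polynomial.eval₂_X,
    Polynomial.eval₂_C, map_pow] using this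

theorem phi_vanish : ∀ p ∈ Ideal.span (Igen n s), φ n s p = 0 := by
  intro p hp
  refine Submodule.span_induction ?_ ?_ ?_ ?_ hp
  · rintro x (rfl | rfl)
    · simp only [map_pow]
      have : φ n s (X 0) = cB n s := by simp
      rw [this, c_pow]
    · have h1 : φ n s (X 1) = dB n s := by simp
      have h0 : φ n s (X 0) = cB n s := by simp
      rw [map_add, map_pow, map_pow, h1, h0, d_sq]
  · simp
  · intro x y _ _ hx hy; rw [map_add, hx, hy, add_zero]
  · intro a x _ hx; rw [smul_eq_mul, map_mul, hx, mul_zero]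

abbrev φbar : Qring n s →ₐ[R2] Bring n s :=
  Ideal.Quotient.liftₐ (Ideal.span (Igen n s)) (φ n s) (phi_vanish n s)

abbrev mkQ : MvPolynomial (Fin 2) R2 →+* Qring n s := Ideal.Quotient.mk _

theorem phibar_mk (p : MvPolynomial (Fin 2) R2) : φbar n s (mkQ n s p) = φ n s p :=
  Ideal.Quotient.liftₐ_apply _ _ _ _

theorem c0_pow : (mkQ n s (X 0)) ^ (n + 1) = 0 := by
  rw [← map_pow, Ideal.Quotient.eq_zero_iff_mem]
  exact Ideal.subset_span (Or.inl rfl)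

abbrev iA : Aring n →+* Qring n s :=
  AdjoinRoot.lift (algebraMap R2 (Qring n s)) (mkQ n s (X 0)) (by
    simp only [fpoly, Polynomial.eval₂_pow, Polynomial.eval₂_X]
    exact c0_pow n s)

theorem d0_eq : (mkQ n s (X 1)) ^ 2 + (mkQ n s (X 0)) ^ s = 0 := by
  rw [← map_pow, ← map_pow, ← map_add, Ideal.Quotient.eq_zero_iff_mem]
  exact Ideal.subset_span (Or.inr rfl)

abbrev ψ : Bring n s →+* Qring n s :=
  AdjoinRoot.lift (iA n s) (mkQ n s (X 1)) (by
    simp only [gpoly, Polynomial.eval₂_add, Polynomial.eval₂_pow, Polynomial.eval₂_X,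
      Polynomial.eval₂_C, map_pow, AdjoinRoot.lift_root]
    exact d0_eq n s)

theorem psi_c : ψ n s (cB n s) = mkQ n s (X 0) := by
  rw [cB, AdjoinRoot.lift_of, AdjoinRoot.lift_root]

theorem psi_d : ψ n s (dB n s) = mkQ n s (X 1) := AdjoinRoot.lift_root _

theorem left_inv : ∀ x, ψ n s (φbar n s x) = x := by
  have key : (ψ n s).comp ((φ n s : MvPolynomial (Fin 2) R2 →+* Bring n s)) = mkQ n s := by
    apply MvPolynomial.ringHom_ext
    · intro r
      exact RingHom.congr_fun (RingHom.ext_zmod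
        (((ψ n s).comp ((φ n s : MvPolynomial (Fin 2) R2 →+* Bring n s))).comp MvPolynomial.C)
        ((mkQ n s).comp MvPolynomial.C)) r
    · intro i
      simp only [RingHom.comp_apply, RingHom.coe_coe]
      fin_cases i
      · have : φ n s (X 0) = cB n s := by simp
        rw [show (X (⟨0, by omega⟩ : Fin 2) : MvPolynomial (Fin 2) R2) = X 0 from rfl, this]
        exact psi_c n s
      · have : φ n s (X 1) = dB n s := by simp
        rw [show (X (⟨1, by omega⟩ : Fin 2) : MvPolynomial (Fin 2) R2) = X 1 from rfl, this]
        exact psi_d n s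
  intro x
  obtain ⟨p, rfl⟩ := Ideal.Quotient.mk_surjective x
  rw [show (Ideal.Quotient.mk (Ideal.span (Igen n s))) p = mkQ n s p from rfl, phibar_mk]
  exact RingHom.congr_fun key p

theorem phi_surj : Function.Surjective (φ n s) := by
  rw [← AlgHom.range_eq_top, eq_top_iff]
  intro b _
  have hc : cB n s ∈ (φ n s).range := ⟨X 0, by simp⟩
  have hd : dB n s ∈ (φ n s).range := ⟨X 1, by simp⟩
  have hA : ∀ a : Aring n, AdjoinRoot.of (gpoly n s) a ∈ (φ n s).range := by
    intro a
    have ha : a ∈ Algebra.adjoin R2 ({AdjoinRoot.root (fpoly n)} : Set (Aring n)) := by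
      rw [AdjoinRoot.adjoinRoot_eq_top]; trivial
    refine Algebra.adjoin_induction ?_ ?_ ?_ ?_ ha
    · rintro x rfl; exact hc
    · intro r
      have : (AdjoinRoot.of (gpoly n s)).comp (algebraMap R2 (Aring n)) =
          algebraMap R2 (Bring n s) := RingHom.ext_zmod _ _
      rw [show AdjoinRoot.of (gpoly n s) (algebraMap R2 (Aring n) r)
          = algebraMap R2 (Bring n s) r from RingHom.congr_fun this r]
      exact Subalgebra.algebraMap_mem _ r
    · intro x y _ _ hx hy; rw [map_add]; exact add_mem hx hy
    · intro x y _ _ hx hy; rw [map_mul]; exact mul_mem hx hy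
  have hb : b ∈ Algebra.adjoin (Aring n) ({dB n s} : Set (Bring n s)) := by
    rw [AdjoinRoot.adjoinRoot_eq_top]; trivial
  refine Algebra.adjoin_induction ?_ ?_ ?_ ?_ hb
  · rintro x rfl; exact hd
  · intro a; exact hA a
  · intro x y _ _ hx hy; exact add_mem hx hy
  · intro x y _ _ hx hy; exact mul_mem hx hy

theorem phibar_bij : Function.Bijective (φbar n s) := by
  constructor
  · exact Function.LeftInverse.injective (left_inv n s)
  · intro b
    obtain ⟨p, hp⟩ := phi_surj n s b
    exact ⟨Ideal.Quotient.mk _ p, (phibar_mk n s p).trans hp⟩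

abbrev eQB : Qring n s ≃ₐ[R2] Bring n s := AlgEquiv.ofBijective (φbar n s) (phibar_bij n s)

abbrev pbA : PowerBasis R2 (Aring n) := AdjoinRoot.powerBasis' (hmonic_f n)

abbrev pbB : PowerBasis (Aring n) (Bring n s) := AdjoinRoot.powerBasis' (hmonic_g n s)

theorem finrank_B : Module.finrank R2 (Bring n s) = 2 * n + 2 := by
  have bB : Module.Basis (Fin (pbA n).dim × Fin (pbB n s).dim) R2 (Bring n s) :=
    Module.Basis.smulTower (pbA n).basis (pbB n s).basis
  rw [Module.finrank_eq_card_basis bB]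
  have hA : (pbA n).dim = n + 1 := by
    show (fpoly n).natDegree = n + 1
    simp [fpoly]
  have hB : (pbB n s).dim = 2 := by
    haveI : Nontrivial (Aring n) := AdjoinRoot.nontrivial _ (by
      rw [fpoly, Polynomial.degree_X_pow]
      exact_mod_cast Nat.succ_ne_zero n)
    show (gpoly n s).natDegree = 2
    exact Polynomial.natDegree_X_pow_add_C
  rw [Fintype.card_prod, Fintype.card_fin, Fintype.card_fin, hA, hB]
  ring

theorem finrank_Q : Module.finrank R2 (Qring n s) = 2 * n + 2 := by
  rw [(eQB n s).toLinearEquiv.finrank_eq]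
  exact finrank_B n s

end TwistedRingAux

end

/-- For `n ≥ 0` and `s ≥ 1`, the ring `ℤ₂[c, d]/(c^{n+1}, d² + c^s)` has
dimension `2n + 2` as a `ℤ₂`-vector space. -/
theorem finrank_quotient_twisted_ring (n s : ℕ) (hs : 1 ≤ s) :
    Module.finrank (ZMod 2)
      (MvPolynomial (Fin 2) (ZMod 2) ⧸
        Ideal.span {(X 0 : MvPolynomial (Fin 2) (ZMod 2)) ^ (n + 1), (X 1) ^ 2 + (X 0) ^ s}) =
      2 * n + 2 :=
  TwistedRingAux.finrank_Q n s
end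

section
/- Let n ≥ 0. There is an isomorphism of ℤ₂-algebras ℤ₂[c, d]/(c^{n+1}, d² + c·d) ≅ ℤ₂[x, y]/(x^{n+2}, y^{n+2}, x^{n+1} + y^{n+1}, x·y), induced by x ↦ d and y ↦ d + c. -/
open MvPolynomial

private lemma add_self_zero {A : Type*} [CommRing A] [Algebra (ZMod 2) A] (x : A) :
    x + x = 0 := by
  have h : ((2 : ZMod 2)) • x = x + x := two_smul _ x
  rw [show (2 : ZMod 2) = 0 from rfl, zero_smul] at h
  exact h.symm

private lemma pow_succ_of_sq {A : Type*} [CommRing A] (a c : A) (h : c ^ 2 = a * c) :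
    ∀ k, c ^ (k + 1) = a ^ k * c := by
  intro k
  induction k with
  | zero => simp
  | succ k ih =>
    have : c ^ (k + 2) = c ^ (k + 1) * c := by ring
    rw [this, ih]
    calc a ^ k * c * c = a ^ k * c ^ 2 := by ring
      _ = a ^ k * (a * c) := by rw [h]
      _ = a ^ (k + 1) * c := by ring

private lemma freshman {A : Type*} [CommRing A] [Algebra (ZMod 2) A] (x y : A)
    (hxy : x * y = 0) : ∀ k, (x + y) ^ (k + 1) = x ^ (k + 1) + y ^ (k + 1) := by
  intro k
  induction k with
  | zero => simp
  | succ k ih =>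
    have h1 : (x + y) ^ (k + 2) = (x + y) ^ (k + 1) * (x + y) := by ring
    rw [h1, ih]
    linear_combination (x ^ k + y ^ k) * hxy

set_option maxHeartbeats 1000000 in
/-- For `n ≥ 0`, there is a `ℤ₂`-algebra isomorphism
`ℤ₂[c, d]/(c^{n+1}, d² + c·d) ≅ ℤ₂[x, y]/(x^{n+2}, y^{n+2}, x^{n+1} + y^{n+1}, x·y)`
induced by `x ↦ d` and `y ↦ d + c`. -/
theorem algEquiv_to_connected_sum_ring (n : ℕ) :
    ∃ e : (MvPolynomial (Fin 2) (ZMod 2) ⧸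
            Ideal.span {(X 0 : MvPolynomial (Fin 2) (ZMod 2)) ^ (n + 2), (X 1) ^ (n + 2),
              (X 0) ^ (n + 1) + (X 1) ^ (n + 1), (X 0) * (X 1)})
          ≃ₐ[ZMod 2]
          (MvPolynomial (Fin 2) (ZMod 2) ⧸
            Ideal.span {(X 0 : MvPolynomial (Fin 2) (ZMod 2)) ^ (n + 1),
              (X 1) ^ 2 + (X 0) * (X 1)}),
      e (Ideal.Quotient.mk _ (X 0)) = Ideal.Quotient.mk _ (X 1) ∧
      e (Ideal.Quotient.mk _ (X 1)) = Ideal.Quotient.mk _ (X 1 + X 0) := by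
  set I : Ideal (MvPolynomial (Fin 2) (ZMod 2)) :=
    Ideal.span {(X 0 : MvPolynomial (Fin 2) (ZMod 2)) ^ (n + 2), (X 1) ^ (n + 2),
      (X 0) ^ (n + 1) + (X 1) ^ (n + 1), (X 0) * (X 1)} with hI
  set J : Ideal (MvPolynomial (Fin 2) (ZMod 2)) :=
    Ideal.span {(X 0 : MvPolynomial (Fin 2) (ZMod 2)) ^ (n + 1),
      (X 1) ^ 2 + (X 0) * (X 1)} with hJ
  -- generators of the quotients
  set a : MvPolynomial (Fin 2) (ZMod 2) ⧸ J := Ideal.Quotient.mk J (X 0) with ha'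
  set b : MvPolynomial (Fin 2) (ZMod 2) ⧸ J := Ideal.Quotient.mk J (X 1) with hb'
  set x : MvPolynomial (Fin 2) (ZMod 2) ⧸ I := Ideal.Quotient.mk I (X 0) with hx'
  set y : MvPolynomial (Fin 2) (ZMod 2) ⧸ I := Ideal.Quotient.mk I (X 1) with hy'
  -- relations in J-quotient
  have ha : a ^ (n + 1) = 0 := by
    rw [ha', ← map_pow, Ideal.Quotient.eq_zero_iff_mem]
    exact Ideal.subset_span (by simp)
  have hb : b ^ 2 + a * b = 0 := by
    rw [ha', hb', ← map_pow, ← map_mul, ← map_add, Ideal.Quotient.eq_zero_iff_mem]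
    exact Ideal.subset_span (by simp)
  have hbsq : b ^ 2 = a * b := by
    linear_combination hb - add_self_zero (a * b)
  have habsq : (a + b) ^ 2 = a * (a + b) := by
    linear_combination hb
  -- relations in I-quotient
  have hx : x ^ (n + 2) = 0 := by
    rw [hx', ← map_pow, Ideal.Quotient.eq_zero_iff_mem]
    exact Ideal.subset_span (by simp)
  have hy : y ^ (n + 2) = 0 := by
    rw [hy', ← map_pow, Ideal.Quotient.eq_zero_iff_mem]
    exact Ideal.subset_span (by simp)
  have hs : x ^ (n + 1) + y ^ (n + 1) = 0 := by
    rw [hx', hy', ← map_pow, ← map_pow, ← map_add, Ideal.Quotient.eq_zero_iff_mem]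
    exact Ideal.subset_span (by simp)
  have hxy : x * y = 0 := by
    rw [hx', hy', ← map_mul, Ideal.Quotient.eq_zero_iff_mem]
    exact Ideal.subset_span (by simp)
  -- forward map
  set φ : MvPolynomial (Fin 2) (ZMod 2) →ₐ[ZMod 2] MvPolynomial (Fin 2) (ZMod 2) ⧸ J :=
    aeval ![b, b + a] with hφ
  have hφ0 : φ (X 0) = b := by simp [hφ]
  have hφ1 : φ (X 1) = b + a := by simp [hφ]
  have hIφ : ∀ p ∈ I, φ p = 0 := by
    have hle : I ≤ RingHom.ker (φ : MvPolynomial (Fin 2) (ZMod 2) →+* MvPolynomial (Fin 2) (ZMod 2) ⧸ J) := by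
      rw [hI, Ideal.span_le]
      rintro q hq
      simp only [Set.mem_insert_iff, Set.mem_singleton_iff] at hq
      rcases hq with rfl | rfl | rfl | rfl <;>
        simp only [SetLike.mem_coe, RingHom.mem_ker, AlgHom.toRingHom_eq_coe,
          RingHom.coe_coe, map_pow, map_add, map_mul, hφ0, hφ1]
      · rw [pow_succ_of_sq a b hbsq (n + 1), ha, zero_mul]
      · rw [show b + a = a + b by ring, pow_succ_of_sq a (a + b) habsq (n + 1), ha, zero_mul]
      · rw [pow_succ_of_sq a b hbsq n, show b + a = a + b by ring,
          pow_succ_of_sq a (a + b) habsq n]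
        linear_combination (a ^ n) * add_self_zero b + ha
      · linear_combination hb
    intro p hp
    exact hle hp
  -- backward map
  set ψ : MvPolynomial (Fin 2) (ZMod 2) →ₐ[ZMod 2] MvPolynomial (Fin 2) (ZMod 2) ⧸ I :=
    aeval ![x + y, x] with hψ
  have hψ0 : ψ (X 0) = x + y := by simp [hψ]
  have hψ1 : ψ (X 1) = x := by simp [hψ]
  have hJψ : ∀ p ∈ J, ψ p = 0 := by
    have hle : J ≤ RingHom.ker (ψ : MvPolynomial (Fin 2) (ZMod 2) →+* MvPolynomial (Fin 2) (ZMod 2) ⧸ I) := by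
      rw [hJ, Ideal.span_le]
      rintro q hq
      simp only [Set.mem_insert_iff, Set.mem_singleton_iff] at hq
      rcases hq with rfl | rfl <;>
        simp only [SetLike.mem_coe, RingHom.mem_ker, AlgHom.toRingHom_eq_coe,
          RingHom.coe_coe, map_pow, map_add, map_mul, hψ0, hψ1]
      · rw [freshman x y hxy n, hs]
      · linear_combination hxy + add_self_zero (x ^ 2)
    intro p hp
    exact hle hp
  set F := Ideal.Quotient.liftₐ I φ hIφ with hF
  set G := Ideal.Quotient.liftₐ J ψ hJψ with hG
  have hFx : F x = b := by
    rw [hx', hF]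
    exact hφ0
  have hFy : F y = b + a := by
    rw [hy', hF]
    exact hφ1
  have hGa : G a = x + y := by
    rw [ha', hG]
    exact hψ0
  have hGb : G b = x := by
    rw [hb', hG]
    exact hψ1
  have hFG : F.comp G = AlgHom.id (ZMod 2) _ := by
    apply Ideal.Quotient.algHom_ext
    apply MvPolynomial.algHom_ext
    intro i
    fin_cases i <;>
      simp only [AlgHom.comp_apply, Ideal.Quotient.mkₐ_eq_mk, AlgHom.id_apply]
    · show F (G a) = a
      rw [hGa, map_add, hFx, hFy]
      linear_combination add_self_zero b
    · show F (G b) = b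
      rw [hGb, hFx]
  have hGF : G.comp F = AlgHom.id (ZMod 2) _ := by
    apply Ideal.Quotient.algHom_ext
    apply MvPolynomial.algHom_ext
    intro i
    fin_cases i <;>
      simp only [AlgHom.comp_apply, Ideal.Quotient.mkₐ_eq_mk, AlgHom.id_apply]
    · show G (F x) = x
      rw [hFx, hGb]
    · show G (F y) = y
      rw [hFy, map_add, hGb, hGa]
      linear_combination add_self_zero x
  refine ⟨AlgEquiv.ofAlgHom F G hFG hGF, ?_, ?_⟩
  · exact hFx
  · rw [show (X 1 + X 0 : MvPolynomial (Fin 2) (ZMod 2)) = X 1 + X 0 from rfl]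
    show F y = Ideal.Quotient.mk J (X 1 + X 0)
    rw [hFy, map_add]
end

section
/- Let q ≥ 1, j ≥ 1 and r be integers with r > q·j. The quotient ring ℤ₂[c, d]/(c^{r+1}, c^{qj} + d^j, c^{r−qj+1}·d) of the polynomial ring in two variables c, d over ℤ₂ has dimension j·(r − q·j) + q·j + j as a vector space over ℤ₂. -/
open MvPolynomial

namespace Stmt11

noncomputable section

abbrev R2 := MvPolynomial (Fin 2) (ZMod 2)

def toExp (p : ℕ × ℕ) : Fin 2 →₀ ℕ := Finsupp.single 0 p.1 + Finsupp.single 1 p.2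

def mono (a b : ℕ) : R2 := monomial (toExp (a, b)) 1

lemma toExp_injective : Function.Injective toExp := by
  intro p p' h
  have h0 := congrArg (fun f : Fin 2 →₀ ℕ => f 0) h
  have h1 := congrArg (fun f : Fin 2 →₀ ℕ => f 1) h
  simp only [toExp, Finsupp.add_apply, Finsupp.single_apply] at h0 h1
  norm_num at h0 h1
  exact Prod.ext h0 h1

lemma exp_eq (m : Fin 2 →₀ ℕ) : m = toExp (m 0, m 1) := by
  ext x
  fin_cases x
  · simp [toExp]
  · simp [toExp, Finsupp.single_apply]

lemma mono_eq_pow (a b : ℕ) : mono a b = (X 0 : R2) ^ a * (X 1) ^ b := by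
  simp [mono, toExp, X_pow_eq_monomial, monomial_mul]

lemma mono_mul (a b a' b' : ℕ) :
    mono a b * mono a' b' = mono (a + a') (b + b') := by
  simp only [mono_eq_pow, pow_add]; ring

lemma mono_linearIndependent :
    LinearIndependent (ZMod 2) fun p : ℕ × ℕ => mono p.1 p.2 := by
  have h := (MvPolynomial.basisMonomials (Fin 2) (ZMod 2)).linearIndependent
  have := h.comp toExp toExp_injective
  simpa [Function.comp_def, coe_basisMonomials, mono] using this

variable (q j r : ℕ)

/-- Normal form of the monomial `c^a d^b`. -/
def nf (a b : ℕ) : R2 :=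
  if b % j = 0 then
    (if a + q * j * (b / j) ≤ r then mono (a + q * j * (b / j)) 0 else 0)
  else
    (if a + q * j * (b / j) ≤ r - q * j then mono (a + q * j * (b / j)) (b % j) else 0)

/-- Normal form as a linear map. -/
def NF : R2 →ₗ[ZMod 2] R2 :=
  (MvPolynomial.basisMonomials (Fin 2) (ZMod 2)).constr (ZMod 2)
    (fun m : Fin 2 →₀ ℕ => nf q j r (m 0) (m 1))

lemma NF_monomial (m : Fin 2 →₀ ℕ) :
    NF q j r (monomial m 1) = nf q j r (m 0) (m 1) := by
  have : (monomial m 1 : R2) = MvPolynomial.basisMonomials (Fin 2) (ZMod 2) m := by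
    rw [coe_basisMonomials]
  rw [this]
  exact Module.Basis.constr_basis _ _ _ _

lemma NF_mono (a b : ℕ) : NF q j r (mono a b) = nf q j r a b := by
  have := NF_monomial q j r (toExp (a, b))
  simp only [mono]
  rw [this]
  simp [toExp, Finsupp.single_apply]

lemma killA (a b : ℕ) : NF q j r (mono a b * mono (r + 1) 0) = 0 := by
  rw [mono_mul, NF_mono, nf]
  split_ifs with h1 h2 h3 <;> first | rfl | omega

lemma killB (hj : 1 ≤ j) (a b : ℕ) :
    NF q j r (mono a b * (mono (q * j) 0 + mono 0 j)) = 0 := by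
  rw [mul_add, map_add, mono_mul, mono_mul, NF_mono, NF_mono]
  have h1 : (b + j) % j = b % j := Nat.add_mod_right b j
  have h2 : (b + j) / j = b / j + 1 := Nat.add_div_right b hj
  have h3 : a + q * j * ((b + j) / j) = a + q * j + q * j * (b / j) := by
    rw [h2]; ring
  have : nf q j r (a + q * j) (b + 0) = nf q j r (a + 0) (b + j) := by
    simp only [nf, h1, h3, Nat.add_zero, Nat.zero_add, Nat.add_zero]
  rw [this, CharTwo.add_self_eq_zero]

lemma killC (hq : 1 ≤ q) (hj : 1 ≤ j) (hr : q * j < r) (a b : ℕ) :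
    NF q j r (mono a b * mono (r - q * j + 1) 1) = 0 := by
  rw [mono_mul, NF_mono, nf]
  have hd := Nat.div_add_mod (b + 1) j
  split_ifs with h1 h2 h3
  · exfalso
    have ht : 1 ≤ (b + 1) / j := by
      rcases Nat.eq_zero_or_pos ((b + 1) / j) with h | h
      · rw [h, Nat.mul_zero] at hd; omega
      · exact h
    have hmul : q * j ≤ q * j * ((b + 1) / j) := Nat.le_mul_of_pos_right _ ht
    omega
  · rfl
  · exfalso; omega
  · rfl

def Istd : Ideal R2 :=
  Ideal.span {(X 0 : R2) ^ (r + 1), (X 0) ^ (q * j) + (X 1) ^ j,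
    (X 0) ^ (r - q * j + 1) * X 1}

lemma gen1_eq : (X 0 : R2) ^ (r + 1) = mono (r + 1) 0 := by
  rw [mono_eq_pow, pow_zero, mul_one]

lemma gen2_eq : (X 0 : R2) ^ (q * j) + (X 1) ^ j = mono (q * j) 0 + mono 0 j := by
  rw [mono_eq_pow, mono_eq_pow, pow_zero, pow_zero, mul_one, one_mul]

lemma gen3_eq : (X 0 : R2) ^ (r - q * j + 1) * X 1 = mono (r - q * j + 1) 1 := by
  rw [mono_eq_pow, pow_one]

lemma NF_mul_gen {g : R2} (hg : ∀ a b, NF q j r (mono a b * g) = 0) (p : R2) :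
    NF q j r (p * g) = 0 := by
  induction p using MvPolynomial.induction_on' with
  | monomial m c =>
    have : (monomial m c : R2) = c • mono (m 0) (m 1) := by
      rw [mono, ← exp_eq, smul_monomial, smul_eq_mul, mul_one]
    rw [this, smul_mul_assoc, map_smul, hg, smul_zero]
  | add p1 p2 h1 h2 =>
    rw [add_mul, map_add, h1, h2, add_zero]

lemma I_le_ker (hq : 1 ≤ q) (hj : 1 ≤ j) (hr : q * j < r) :
    ∀ x ∈ Istd q j r, NF q j r x = 0 := by
  intro x hx
  rw [Istd, show ({(X 0 : R2) ^ (r + 1), (X 0) ^ (q * j) + (X 1) ^ j,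
      (X 0) ^ (r - q * j + 1) * X 1} : Set R2) =
      insert ((X 0 : R2) ^ (r + 1)) (insert ((X 0 : R2) ^ (q * j) + (X 1) ^ j)
        {(X 0 : R2) ^ (r - q * j + 1) * X 1}) from rfl] at hx
  rw [Ideal.mem_span_insert] at hx
  obtain ⟨p1, y, hy, rfl⟩ := hx
  rw [Ideal.mem_span_insert] at hy
  obtain ⟨p2, z, hz, rfl⟩ := hy
  rw [Ideal.mem_span_singleton] at hz
  obtain ⟨p3, rfl⟩ := hz
  rw [map_add, map_add]
  rw [show p1 * ((X 0 : R2) ^ (r + 1)) = p1 * mono (r + 1) 0 by rw [gen1_eq]]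
  rw [show p2 * ((X 0 : R2) ^ (q * j) + (X 1) ^ j) =
      p2 * (mono (q * j) 0 + mono 0 j) by rw [gen2_eq]]
  rw [show (X 0 : R2) ^ (r - q * j + 1) * X 1 * p3 =
      p3 * mono (r - q * j + 1) 1 by rw [← gen3_eq]; ring]
  rw [NF_mul_gen q j r (killA q j r) p1,
    NF_mul_gen q j r (killB q j r hj) p2,
    NF_mul_gen q j r (killC q j r hq hj hr) p3]
  simp

lemma mem_Istd_gen2 : (X 0 : R2) ^ (q * j) + (X 1) ^ j ∈ Istd q j r :=
  Ideal.subset_span (by simp)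

lemma step (x y : ℕ) :
    Ideal.Quotient.mk (Istd q j r) (mono x (y + j)) =
      Ideal.Quotient.mk (Istd q j r) (mono (x + q * j) y) := by
  rw [Ideal.Quotient.mk_eq_mk_iff_sub_mem, CharTwo.sub_eq_add]
  have : mono x (y + j) + mono (x + q * j) y =
      mono x y * ((X 0 : R2) ^ (q * j) + (X 1) ^ j) := by
    rw [gen2_eq, mul_add, mono_mul, mono_mul, add_comm]
    norm_num
  rw [this]
  exact Ideal.mul_mem_left _ _ (mem_Istd_gen2 q j r)

lemma iterate (a s : ℕ) : ∀ t : ℕ,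
    Ideal.Quotient.mk (Istd q j r) (mono a (s + j * t)) =
      Ideal.Quotient.mk (Istd q j r) (mono (a + q * j * t) s)
  | 0 => by simp
  | t + 1 => by
    have h1 : s + j * (t + 1) = (s + j * t) + j := by ring
    have h2 : a + q * j * (t + 1) = (a + q * j) + q * j * t := by ring
    rw [h1, step q j r a (s + j * t), h2]
    have := iterate (a + q * j) s t
    rw [this]

lemma drop0 {e : ℕ} (he : r < e) :
    Ideal.Quotient.mk (Istd q j r) (mono e 0) = 0 := by
  rw [Ideal.Quotient.eq_zero_iff_mem]
  have : mono e 0 = mono (e - (r + 1)) 0 * ((X 0 : R2) ^ (r + 1)) := by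
    rw [gen1_eq, mono_mul]
    have h1 : e - (r + 1) + (r + 1) = e := by omega
    rw [h1, Nat.add_zero]
  rw [this]
  exact Ideal.mul_mem_left _ _ (Ideal.subset_span (by simp))

lemma drop1 {e s : ℕ} (hr : q * j < r) (hs : 1 ≤ s) (he : r - q * j < e) :
    Ideal.Quotient.mk (Istd q j r) (mono e s) = 0 := by
  rw [Ideal.Quotient.eq_zero_iff_mem]
  have : mono e s = mono (e - (r - q * j + 1)) (s - 1) *
      ((X 0 : R2) ^ (r - q * j + 1) * X 1) := by
    rw [gen3_eq, mono_mul]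
    have h1 : e - (r - q * j + 1) + (r - q * j + 1) = e := by omega
    have h2 : s - 1 + 1 = s := by omega
    rw [h1, h2]
  rw [this]
  exact Ideal.mul_mem_left _ _ (Ideal.subset_span (by simp))

lemma nfspec (hq : 1 ≤ q) (hj : 1 ≤ j) (hr : q * j < r) (a b : ℕ) :
    Ideal.Quotient.mk (Istd q j r) (mono a b) =
      Ideal.Quotient.mk (Istd q j r) (nf q j r a b) := by
  have hb : b = b % j + j * (b / j) := by
    rw [Nat.add_comm, Nat.div_add_mod]
  conv_lhs => rw [hb]
  rw [iterate q j r a (b % j) (b / j)]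
  rw [nf]
  split_ifs with h1 h2 h3
  · rw [h1]
  · rw [h1] at *
    exact drop0 q j r (by omega)
  · rfl
  · exact drop1 q j r hr (by omega) (by omega)

def Sset : Finset (ℕ × ℕ) :=
  (Finset.range (r + 1)) ×ˢ {0} ∪ (Finset.range (r - q * j + 1)) ×ˢ (Finset.Ico 1 j)

lemma mem_Sset (p : ℕ × ℕ) :
    p ∈ Sset q j r ↔ (p.1 ≤ r ∧ p.2 = 0) ∨ (p.1 ≤ r - q * j ∧ 1 ≤ p.2 ∧ p.2 < j) := by
  simp only [Sset, Finset.mem_union, Finset.mem_product, Finset.mem_range,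
    Finset.mem_singleton, Finset.mem_Ico, Nat.lt_succ_iff]

lemma nf_of_mem {p : ℕ × ℕ} (hp : p ∈ Sset q j r) :
    nf q j r p.1 p.2 = mono p.1 p.2 := by
  rw [mem_Sset] at hp
  rcases hp with ⟨h1, h2⟩ | ⟨h1, h2, h3⟩
  · rw [h2, nf]
    simp [h1]
  · have hm : p.2 % j = p.2 := Nat.mod_eq_of_lt h3
    have hd : p.2 / j = 0 := Nat.div_eq_of_lt h3
    rw [nf, hm, hd]
    have hne : ¬ p.2 = 0 := by omega
    simp only [hne, if_false, Nat.mul_zero, Nat.add_zero, h1, if_true]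

lemma nf_cases (hj : 1 ≤ j) (a b : ℕ) :
    nf q j r a b = 0 ∨ ∃ p ∈ Sset q j r, nf q j r a b = mono p.1 p.2 := by
  rw [nf]
  split_ifs with h1 h2 h3
  · right
    refine ⟨(a + q * j * (b / j), 0), ?_, rfl⟩
    rw [mem_Sset]
    left; exact ⟨h2, rfl⟩
  · left; rfl
  · right
    refine ⟨(a + q * j * (b / j), b % j), ?_, rfl⟩
    rw [mem_Sset]
    right
    refine ⟨h3, by omega, Nat.mod_lt _ (by omega)⟩
  · left; rfl

lemma Sset_card (hq : 1 ≤ q) (hj : 1 ≤ j) (hr : q * j < r) :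
    (Sset q j r).card = j * (r - q * j) + q * j + j := by
  rw [Sset, Finset.card_union_of_disjoint, Finset.card_product, Finset.card_product]
  · rw [Finset.card_range, Finset.card_range, Finset.card_singleton, Nat.card_Ico]
    obtain ⟨j', rfl⟩ : ∃ j', j = j' + 1 := ⟨j - 1, by omega⟩
    obtain ⟨k, hk⟩ : ∃ k, r = q * (j' + 1) + k + 1 := ⟨r - q * (j' + 1) - 1, by omega⟩
    subst hk
    have h1 : q * (j' + 1) + k + 1 - q * (j' + 1) = k + 1 := by omega
    rw [h1]
    simp only [Nat.add_sub_cancel]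
    ring
  · rw [Finset.disjoint_left]
    intro p hp1 hp2
    simp only [Finset.mem_product, Finset.mem_singleton, Finset.mem_Ico] at hp1 hp2
    omega

end

end Stmt11

open Stmt11 in
/-- For integers `q ≥ 1`, `j ≥ 1` and `r > q·j`, the ring
`ℤ₂[c, d]/(c^{r+1}, c^{qj} + d^j, c^{r−qj+1}·d)` has dimension `j·(r − q·j) + q·j + j`
as a `ℤ₂`-vector space. -/
theorem finrank_quotient_mixed_ring (q j r : ℕ) (hq : 1 ≤ q) (hj : 1 ≤ j) (hr : q * j < r) :
    Module.finrank (ZMod 2)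
      (MvPolynomial (Fin 2) (ZMod 2) ⧸
        Ideal.span {(X 0 : MvPolynomial (Fin 2) (ZMod 2)) ^ (r + 1),
          (X 0) ^ (q * j) + (X 1) ^ j, (X 0) ^ (r - q * j + 1) * X 1}) =
      j * (r - q * j) + q * j + j := by
  classical
  show Module.finrank (ZMod 2) (R2 ⧸ Istd q j r) = j * (r - q * j) + q * j + j
  set I := Istd q j r with hI
  let L : R2 →ₗ[ZMod 2] (R2 ⧸ I) := (Ideal.Quotient.mkₐ (ZMod 2) I).toLinearMap
  have hmk : ∀ f : R2, L f = Ideal.Quotient.mk I f := fun f => rfl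
  let v : ↥(Sset q j r) → (R2 ⧸ I) :=
    fun p => Ideal.Quotient.mk I (mono (p : ℕ × ℕ).1 (p : ℕ × ℕ).2)
  have hnfmono : ∀ i : ↥(Sset q j r),
      nf q j r (i : ℕ × ℕ).1 (i : ℕ × ℕ).2 = mono (i : ℕ × ℕ).1 (i : ℕ × ℕ).2 :=
    fun i => nf_of_mem q j r i.2
  have hindep : LinearIndependent (ZMod 2) v := by
    rw [Fintype.linearIndependent_iff]
    intro g hg
    have hsum : L (∑ i : ↥(Sset q j r), g i • mono (i : ℕ × ℕ).1 (i : ℕ × ℕ).2) = 0 := by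
      rw [map_sum]
      simp only [map_smul]
      simpa only [hmk] using hg
    rw [hmk, Ideal.Quotient.eq_zero_iff_mem] at hsum
    have hNF := I_le_ker q j r hq hj hr _ hsum
    rw [map_sum] at hNF
    simp only [map_smul, NF_mono, hnfmono] at hNF
    have hLI : LinearIndependent (ZMod 2)
        (fun i : ↥(Sset q j r) => mono (i : ℕ × ℕ).1 (i : ℕ × ℕ).2) :=
      mono_linearIndependent.comp (Subtype.val) Subtype.val_injective
    exact Fintype.linearIndependent_iff.mp hLI g hNF
  have hspan : ⊤ ≤ Submodule.span (ZMod 2) (Set.range v) := by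
    rintro x -
    obtain ⟨f, rfl⟩ := Ideal.Quotient.mk_surjective x
    induction f using MvPolynomial.induction_on' with
    | monomial m c =>
      have h1 : (monomial m c : R2) = c • mono (m 0) (m 1) := by
        rw [mono, ← exp_eq, smul_monomial, smul_eq_mul, mul_one]
      rw [h1, ← hmk, map_smul]
      apply Submodule.smul_mem
      rw [hmk, nfspec q j r hq hj hr]
      rcases nf_cases q j r hj (m 0) (m 1) with h | ⟨p, hp, hEq⟩
      · rw [h, map_zero]
        exact zero_mem _
      · rw [hEq]
        exact Submodule.subset_span ⟨⟨p, hp⟩, rfl⟩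
    | add p1 p2 ih1 ih2 =>
      rw [← hmk, map_add]
      exact add_mem (by rw [hmk] at *; exact ih1) (by rw [hmk] at *; exact ih2)
  let basis : Module.Basis (↥(Sset q j r)) (ZMod 2) (R2 ⧸ I) := Module.Basis.mk hindep hspan
  rw [Module.finrank_eq_card_basis basis, Fintype.card_coe,
    Sset_card q j r hq hj hr]
end
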